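/- The core of L(K_{2m}) is the complete graph K_{2m−1}; equivalently, the edge set of K_{2m} can be partitioned into 2m−1 perfect matchings, yielding a proper (2m−1)-colouring of L(K_{2m}), and L(K_{2m}) contains a clique of size 2m−1. -/

import Mathlib

/-- The line graph of the complete graph `K_n`: vertices are the 2-element
subsets of an `n`-set, adjacent when they intersect. -/
def lineK (n : ℕ) : SimpleGraph {e : Finset (Fin n) // e.card = 2} where
  Adj e f := e ≠ f ∧ (e.1 ∩ f.1).Nonempty
  symm := by
    constructor
    intro a b h
    exact ⟨h.1.symm, by rw [Finset.inter_comm]; exact h.2⟩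
  loopless := by
    constructor
    intro a h
    exact h.1 rfl

/-- The core of `L(K_{2m})` is `K_{2m-1}`: there is a homomorphism from
`L(K_{2m})` to the complete graph on `2m − 1` vertices (a proper
`(2m−1)`-colouring, coming from a 1-factorization of `K_{2m}`), and `K_{2m-1}`
embeds into `L(K_{2m})` as a clique. -/
theorem core_lineK_even (m : ℕ) (hm : 1 ≤ m) :
    Nonempty (lineK (2 * m) →g SimpleGraph.completeGraph (Fin (2 * m - 1))) ∧
    Nonempty (SimpleGraph.completeGraph (Fin (2 * m - 1)) ↪g lineK (2 * m)) := by
  set n := 2 * m - 1 with hndef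
  have hn1 : n + 1 = 2 * m := by omega
  haveI : NeZero n := ⟨by omega⟩
  -- the distinguished last vertex
  set lst : Fin (2 * m) := ⟨n, by omega⟩ with hlst
  have hvlt : ∀ u : Fin (2 * m), u ≠ lst → u.val < n := by
    intro u hu
    have h2m := u.isLt
    by_contra h
    refine hu ?_
    apply Fin.ext
    show u.val = n
    omega
  -- cast injectivity
  have inj : ∀ u w : Fin (2 * m), u ≠ lst → w ≠ lst →
      ((u.val : ZMod n) = (w.val : ZMod n)) → u = w := by
    intro u w hu hw h
    have h1 := ZMod.val_cast_of_lt (hvlt u hu)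
    have h2 := ZMod.val_cast_of_lt (hvlt w hw)
    exact Fin.ext (by rw [← h1, ← h2, h])
  -- two is cancellable mod odd n
  have h2cancel : ∀ x y : ZMod n, 2 * x = 2 * y → x = y := by
    intro x y h
    have hcop : Nat.Coprime 2 n := by
      refine (Nat.Prime.coprime_iff_not_dvd Nat.prime_two).mpr ?_
      rintro ⟨k, hk⟩
      omega
    have hu : IsUnit ((2 : ℕ) : ZMod n) := (ZMod.isUnit_iff_coprime 2 n).mpr hcop
    have h2 : ((2 : ℕ) : ZMod n) = (2 : ZMod n) := by push_cast; ring
    rw [h2] at hu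
    exact hu.mul_left_cancel h
  -- pair extraction
  have pair : ∀ (e : Finset (Fin (2 * m))), e.card = 2 → ∀ v ∈ e,
      ∃ a, a ≠ v ∧ e = {v, a} := by
    intro e he v hv
    obtain ⟨x, y, hxy, rfl⟩ := Finset.card_eq_two.mp he
    rcases Finset.mem_insert.mp hv with rfl | hv'
    · exact ⟨y, hxy.symm, rfl⟩
    · rw [Finset.mem_singleton] at hv'
      subst hv'
      exact ⟨x, hxy, Finset.pair_comm x v⟩
  -- the colouring
  set s : Finset (Fin (2 * m)) → ZMod n := fun e => ∑ i ∈ e, ((i.val : ZMod n)) with hs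
  set c : Finset (Fin (2 * m)) → ZMod n :=
    fun e => (if lst ∈ e then 2 else 1) * s e with hc
  have slst : ((lst.val : ZMod n)) = 0 := by
    simp [hlst, ZMod.natCast_self]
  have spair : ∀ v a : Fin (2 * m), a ≠ v →
      s {v, a} = (v.val : ZMod n) + (a.val : ZMod n) := by
    intro v a ha
    simp only [hs]
    exact Finset.sum_pair (Ne.symm ha)
  -- key: adjacent edges get distinct colours
  have key : ∀ e f : Finset (Fin (2 * m)), e.card = 2 → f.card = 2 → e ≠ f →
      (e ∩ f).Nonempty → c e ≠ c f := by
    intro e f he hf hef ⟨v, hv⟩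
    have hve : v ∈ e := (Finset.mem_inter.mp hv).1
    have hvf : v ∈ f := (Finset.mem_inter.mp hv).2
    obtain ⟨a, hav, hea⟩ := pair e he v hve
    obtain ⟨b, hbv, hfb⟩ := pair f hf v hvf
    intro hcol
    by_cases hle : lst ∈ e <;> by_cases hlf : lst ∈ f
    · -- both contain lst
      by_cases hvl : v = lst
      · subst hvl
        have hce : c e = 2 * ((a.val : ZMod n)) := by
          simp only [hc]
          rw [if_pos hle, hea, spair _ _ hav, slst, zero_add]
        have hcf : c f = 2 * ((b.val : ZMod n)) := by
          simp only [hc]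
          rw [if_pos hlf, hfb, spair _ _ hbv, slst, zero_add]
        rw [hce, hcf] at hcol
        have hane : a ≠ lst := hav
        have hbne : b ≠ lst := hbv
        have : a = b := inj a b hane hbne (h2cancel _ _ hcol)
        exact hef (by rw [hea, hfb, this])
      · have hal : a = lst := by
          rw [hea] at hle
          rcases Finset.mem_insert.mp hle with h | h
          · exact absurd h.symm hvl
          · exact (Finset.mem_singleton.mp h).symm
        have hbl : b = lst := by
          rw [hfb] at hlf
          rcases Finset.mem_insert.mp hlf with h | h
          · exact absurd h.symm hvl
          · exact (Finset.mem_singleton.mp h).symm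
        exact hef (by rw [hea, hfb, hal, hbl])
    · -- lst ∈ e, lst ∉ f
      have hvl : v ≠ lst := fun h => hlf (h ▸ hvf)
      have hal : a = lst := by
        rw [hea] at hle
        rcases Finset.mem_insert.mp hle with h | h
        · exact absurd h.symm hvl
        · exact (Finset.mem_singleton.mp h).symm
      have hbl : b ≠ lst := fun h => hlf (h ▸ (by rw [hfb]; simp))
      have hce : c e = 2 * ((v.val : ZMod n)) := by
        simp only [hc]
        rw [if_pos hle, hea, spair _ _ hav, hal, slst, add_zero]
      have hcf : c f = (v.val : ZMod n) + (b.val : ZMod n) := by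
        simp only [hc]
        rw [if_neg hlf, hfb, spair _ _ hbv, one_mul]
      rw [hce, hcf] at hcol
      have : (v.val : ZMod n) = (b.val : ZMod n) := by linear_combination hcol
      exact hbv (inj b v hbl hvl this.symm)
    · -- lst ∉ e, lst ∈ f (symmetric)
      have hvl : v ≠ lst := fun h => hle (h ▸ hve)
      have hbl : b = lst := by
        rw [hfb] at hlf
        rcases Finset.mem_insert.mp hlf with h | h
        · exact absurd h.symm hvl
        · exact (Finset.mem_singleton.mp h).symm
      have hal : a ≠ lst := fun h => hle (h ▸ (by rw [hea]; simp))
      have hcf : c f = 2 * ((v.val : ZMod n)) := by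
        simp only [hc]
        rw [if_pos hlf, hfb, spair _ _ hbv, hbl, slst, add_zero]
      have hce : c e = (v.val : ZMod n) + (a.val : ZMod n) := by
        simp only [hc]
        rw [if_neg hle, hea, spair _ _ hav, one_mul]
      rw [hce, hcf] at hcol
      have : (v.val : ZMod n) = (a.val : ZMod n) := by linear_combination -hcol
      exact hav (inj a v hal hvl this.symm)
    · -- neither contains lst
      have hce : c e = (v.val : ZMod n) + (a.val : ZMod n) := by
        simp only [hc]
        rw [if_neg hle, hea, spair _ _ hav, one_mul]
      have hcf : c f = (v.val : ZMod n) + (b.val : ZMod n) := by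
        simp only [hc]
        rw [if_neg hlf, hfb, spair _ _ hbv, one_mul]
      rw [hce, hcf] at hcol
      have hal : a ≠ lst := fun h => hle (h ▸ (by rw [hea]; simp))
      have hbl : b ≠ lst := fun h => hlf (h ▸ (by rw [hfb]; simp))
      have : a = b := inj a b hal hbl (by linear_combination hcol)
      exact hef (by rw [hea, hfb, this])
  constructor
  · -- the homomorphism / colouring
    refine ⟨⟨fun e => ⟨(c e.1).val, ZMod.val_lt _⟩, ?_⟩⟩
    intro e f hadj
    simp only [SimpleGraph.completeGraph, SimpleGraph.top_adj]
    intro h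
    have hcc : c e.1 = c f.1 := by
      have hv : (c e.1).val = (c f.1).val := congrArg Fin.val h
      exact ZMod.val_injective n hv
    exact key e.1 f.1 e.2 f.2 (fun h' => hadj.1 (Subtype.ext h')) hadj.2 hcc
  · -- the embedding: edges through lst form a clique
    have hemb : ∀ i : Fin n, (({⟨i.val, by omega⟩, lst} : Finset (Fin (2 * m))).card = 2) := by
      intro i
      refine Finset.card_pair ?_
      intro h
      rw [Fin.mk_eq_mk] at h
      omega
    set F : Fin n → {e : Finset (Fin (2 * m)) // e.card = 2} :=
      fun i => ⟨{⟨i.val, by omega⟩, lst}, hemb i⟩ with hF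
    have hFinj : Function.Injective F := by
      intro i j hij
      have h1 : (⟨i.val, by omega⟩ : Fin (2 * m)) ∈ ({⟨j.val, by omega⟩, lst} : Finset (Fin (2 * m))) := by
        have h2 := congrArg Subtype.val hij
        simp only [hF] at h2
        rw [← h2]
        simp
      rcases Finset.mem_insert.mp h1 with h | h
      · rw [Fin.mk_eq_mk] at h
        exact Fin.ext h
      · rw [Finset.mem_singleton, hlst, Fin.mk_eq_mk] at h
        omega
    refine ⟨⟨⟨F, hFinj⟩, ?_⟩⟩
    intro i j
    simp only [Function.Embedding.coeFn_mk, SimpleGraph.completeGraph, SimpleGraph.top_adj]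
    constructor
    · rintro ⟨hne, -⟩
      exact fun h => hne (congrArg F h)
    · intro hij
      refine ⟨fun h => hij (hFinj h), ⟨lst, ?_⟩⟩
      rw [Finset.mem_inter]
      constructor <;> · simp only [hF]; simp
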